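/- Every matrix γ = [[a,b],[c,d]] in SL₂(ℤ/p³) with c ∈ pℤ/p³ can be written as γ = γ₁γ₂ where γ₁ ∈ SL₂(ℤ/p³) has both off-diagonal entries in pℤ/p³, and γ₂ ∈ SL₂(ℤ/p³) has lower-left entry in p²ℤ/p³. -/

import Mathlib

open Matrix

/-- Every γ ∈ SL₂(ℤ/p³) with lower-left entry in pℤ/p³ factors as γ₁γ₂ where
γ₁ has both off-diagonal entries in pℤ/p³ and γ₂ has lower-left entry in p²ℤ/p³. -/
theorem stmt_0 (p : ℕ) (hp : p.Prime)
    (γ : SpecialLinearGroup (Fin 2) (ZMod (p ^ 3)))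
    (hc : (p : ZMod (p ^ 3)) ∣ (γ : Matrix (Fin 2) (Fin 2) (ZMod (p ^ 3))) 1 0) :
    ∃ γ₁ γ₂ : SpecialLinearGroup (Fin 2) (ZMod (p ^ 3)),
      γ = γ₁ * γ₂ ∧
      (p : ZMod (p ^ 3)) ∣ (γ₁ : Matrix (Fin 2) (Fin 2) (ZMod (p ^ 3))) 0 1 ∧
      (p : ZMod (p ^ 3)) ∣ (γ₁ : Matrix (Fin 2) (Fin 2) (ZMod (p ^ 3))) 1 0 ∧
      ((p : ZMod (p ^ 3)) ^ 2) ∣ (γ₂ : Matrix (Fin 2) (Fin 2) (ZMod (p ^ 3))) 1 0 := by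
  set R := ZMod (p ^ 3)
  set M : Matrix (Fin 2) (Fin 2) R := (γ : Matrix (Fin 2) (Fin 2) R) with hM
  set a := M 0 0
  set b := M 0 1
  set c := M 1 0
  set d := M 1 1
  have hdet : a * d - b * c = 1 := by
    have := γ.2
    rwa [Matrix.det_fin_two] at this
  obtain ⟨c', hc'⟩ := hc
  have hp3 : ((p : R)) ^ 3 = 0 := by
    have : ((p ^ 3 : ℕ) : R) = 0 := by
      simp [R, ZMod.natCast_self]
    rwa [Nat.cast_pow] at this
  set x : R := (p : R) * c' * b with hx
  have hx3 : x ^ 3 = 0 := by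
    have : x ^ 3 = (p : R) ^ 3 * (c' * b) ^ 3 := by ring
    rw [this, hp3, zero_mul]
  have had : a * d = 1 + x := by
    have : b * c = x := by rw [hc', hx]; ring
    linear_combination hdet + this
  set u : R := d * (1 - x + x ^ 2) with hu
  have hau : a * u = 1 := by
    have : a * u = (a * d) * (1 - x + x ^ 2) := by ring
    rw [this, had]
    linear_combination hx3
  refine ⟨⟨!![a, 0; c, u], by simp [Matrix.det_fin_two, hau]⟩, ?_, ?_, ?_, ?_, ?_⟩
  · exact ⟨!![a, 0; c, u], by simp [Matrix.det_fin_two, hau]⟩⁻¹ * γ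
  · exact (mul_inv_cancel_left _ _).symm
  · simp
  · simp [hc']
  · have hA : (!![a, 0; c, u] : Matrix (Fin 2) (Fin 2) R).det = 1 := by simp [Matrix.det_fin_two, hau]
    let g : SpecialLinearGroup (Fin 2) R := ⟨!![a, 0; c, u], hA⟩
    have hinv : ((g⁻¹ :
        SpecialLinearGroup (Fin 2) R) : Matrix (Fin 2) (Fin 2) R)
        = !![u, 0; -c, a] := by
      show adjugate (!![a, 0; c, u] : Matrix (Fin 2) (Fin 2) R) = _
      rw [Matrix.adjugate_fin_two]
      norm_num
    show (p : R) ^ 2 ∣ (((g⁻¹ :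
        SpecialLinearGroup (Fin 2) R) : Matrix (Fin 2) (Fin 2) R) * (γ : Matrix (Fin 2) (Fin 2) R)) 1 0
    rw [hinv]
    rw [Matrix.mul_apply, Fin.sum_univ_two]
    have h0 : -c * (γ : Matrix (Fin 2) (Fin 2) R) 0 0 + a * (γ : Matrix (Fin 2) (Fin 2) R) 1 0 = 0 := by
      show -(M 1 0) * M 0 0 + M 0 0 * M 1 0 = 0
      ring
    rw [show (!![u, 0; -c, a] : Matrix (Fin 2) (Fin 2) R) 1 0 = -c from rfl,
        show (!![u, 0; -c, a] : Matrix (Fin 2) (Fin 2) R) 1 1 = a from rfl]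
    rw [h0]
    exact dvd_zero _
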